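/- Let (H, c̄) be a labeled graph with labels in [k] and let G = η_{p,r}(H) be obtained by adding all missing edges between vertices labeled p and vertices labeled r (p ≠ r). For S ⊆ V(H) with a_p vertices of label p and a_r of label r in S, and d_p, d_r total vertices of labels p and r: the number of p–r edges of G inside S is a_p·a_r, and the number of p–r edges of G inside the complement of S is (d_p − a_p)(d_r − a_r). Consequently, the coefficient t_{ā,b̄,c̄}(G) of Z_labeled(G) is zero unless b_{p,r} = a_p·a_r and c_{p,r} = (d_p − a_p)(d_r − a_r), in which case it equals the sum of coefficients t_{ā,b̄',c̄'}(H) over all b̄', c̄' agreeing with b̄, c̄ outside the index {p,r}. -/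

import Mathlib

open Finset

/-- The set of edges of `G` contained in the vertex subset `S`. -/
def edgeIn {V : Type*} [Fintype V] [DecidableEq V] (G : SimpleGraph V) [DecidableRel G.Adj]
    (S : Finset V) : Finset (Sym2 V) :=
  G.edgeFinset.filter (· ∈ S.sym2)

/-- The number of edges of `G` inside `S` whose pair of endpoint labels is `p`. -/
def labEdges {V : Type*} [Fintype V] [DecidableEq V] {k : ℕ} (G : SimpleGraph V)
    [DecidableRel G.Adj] (c : V → Fin k) (S : Finset V) (p : Sym2 (Fin k)) : ℕ :=
  ((edgeIn G S).filter (fun e => e.map c = p)).card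

/-- The coefficient `t_{ā,b̄,c̄}(G)` of the monomial
`∏ y_i^{a_i} ∏ x_{i,j}^{b_{i,j}} z_{i,j}^{c_{i,j}}` in `Z_labeled(G,c̄;x̄,ȳ,z̄)`:
the number of vertex subsets `S` whose label counts are given by `a` and whose
labeled edge counts inside `S` (resp. inside the complement of `S`) are given by
`b` (resp. `cc`). -/
def coeffZlab {V : Type*} [Fintype V] [DecidableEq V] {k : ℕ} (G : SimpleGraph V)
    [DecidableRel G.Adj] (c : V → Fin k) (a : Fin k → ℕ) (b cc : Sym2 (Fin k) → ℕ) : ℕ :=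
  (univ.filter (fun S : Finset V =>
    (∀ i : Fin k, (S.filter (fun v => c v = i)).card = a i) ∧
    (∀ p : Sym2 (Fin k), labEdges G c S p = b p) ∧
    (∀ p : Sym2 (Fin k), labEdges G c Sᶜ p = cc p))).card

/-- The clique-width operation `η_{p,r}`: add all missing edges between vertices labeled
`p` and vertices labeled `r`. -/
def etaGraph {V : Type*} {k : ℕ} (H : SimpleGraph V) (c : V → Fin k) (p r : Fin k) :
    SimpleGraph V where
  Adj u v := u ≠ v ∧ (H.Adj u v ∨ (c u = p ∧ c v = r) ∨ (c u = r ∧ c v = p))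
  symm := by
    constructor
    rintro u v ⟨h1, h2⟩
    refine ⟨h1.symm, ?_⟩
    rcases h2 with h | h | h
    · exact Or.inl h.symm
    · exact Or.inr (Or.inr ⟨h.2, h.1⟩)
    · exact Or.inr (Or.inl ⟨h.2, h.1⟩)
  loopless := by constructor; rintro u ⟨h1, _⟩; exact h1 rfl

instance {V : Type*} [DecidableEq V] {k : ℕ} (H : SimpleGraph V) [DecidableRel H.Adj]
    (c : V → Fin k) (p r : Fin k) : DecidableRel (etaGraph H c p r).Adj := fun u v =>
  inferInstanceAs
    (Decidable (u ≠ v ∧ (H.Adj u v ∨ (c u = p ∧ c v = r) ∨ (c u = r ∧ c v = p))))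

lemma eta_adj {V : Type*} {k : ℕ} (H : SimpleGraph V) (c : V → Fin k) (p r : Fin k)
    (u v : V) : (etaGraph H c p r).Adj u v ↔
      u ≠ v ∧ (H.Adj u v ∨ (c u = p ∧ c v = r) ∨ (c u = r ∧ c v = p)) := Iff.rfl

lemma card_filter_compl {V : Type*} [Fintype V] [DecidableEq V] (S : Finset V)
    (P : V → Prop) [DecidablePred P] :
    (Sᶜ.filter P).card = (univ.filter P).card - (S.filter P).card := by
  have h : (univ.filter P) = (S.filter P) ∪ (Sᶜ.filter P) := by
    rw [← Finset.filter_union, Finset.union_compl]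
  have hd : Disjoint (S.filter P) (Sᶜ.filter P) :=
    Finset.disjoint_filter_filter disjoint_compl_right
  rw [h, Finset.card_union_of_disjoint hd]
  omega

lemma labEdges_le {V : Type*} [Fintype V] [DecidableEq V] {k : ℕ} (H : SimpleGraph V)
    [DecidableRel H.Adj] (c : V → Fin k) (S : Finset V) (q : Sym2 (Fin k)) :
    labEdges H c S q ≤ H.edgeFinset.card := by
  rw [labEdges, edgeIn]
  exact Finset.card_le_card ((Finset.filter_subset _ _).trans (Finset.filter_subset _ _))

lemma eta_lab {V : Type*} [Fintype V] [DecidableEq V] {k : ℕ} (H : SimpleGraph V)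
    [DecidableRel H.Adj] (c : V → Fin k) (p r : Fin k) (hpr : p ≠ r) (S : Finset V) :
    labEdges (etaGraph H c p r) c S s(p, r) =
      (S.filter fun v => c v = p).card * (S.filter fun v => c v = r).card := by
  classical
  rw [labEdges]
  have himg : ((edgeIn (etaGraph H c p r) S).filter (fun e => e.map c = s(p, r)))
      = ((S.filter fun v => c v = p) ×ˢ (S.filter fun v => c v = r)).image
          (fun uv => s(uv.1, uv.2)) := by
    ext e
    induction e using Sym2.ind with
    | _ u v =>
      simp only [Finset.mem_filter, Finset.mem_image, Finset.mem_product, edgeIn,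
        SimpleGraph.mem_edgeFinset, SimpleGraph.mem_edgeSet, Finset.mk_mem_sym2_iff,
        Sym2.map_pair_eq, Sym2.eq_iff, eta_adj, Prod.exists]
      constructor
      · rintro ⟨⟨_, huS, hvS⟩, hmap⟩
        rcases hmap with ⟨hu, hv⟩ | ⟨hu, hv⟩
        · exact ⟨u, v, ⟨⟨huS, hu⟩, ⟨hvS, hv⟩⟩, Or.inl ⟨rfl, rfl⟩⟩
        · exact ⟨v, u, ⟨⟨hvS, hv⟩, ⟨huS, hu⟩⟩, Or.inr ⟨rfl, rfl⟩⟩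
      · rintro ⟨x, y, ⟨⟨hxS, hxp⟩, ⟨hyS, hyr⟩⟩, heq⟩
        have hxy : x ≠ y := fun h => hpr (hxp ▸ h ▸ hyr ▸ rfl)
        rcases heq with ⟨hx, hy⟩ | ⟨hx, hy⟩
        · subst hx; subst hy
          exact ⟨⟨⟨hxy, Or.inr (Or.inl ⟨hxp, hyr⟩)⟩, hxS, hyS⟩, Or.inl ⟨hxp, hyr⟩⟩
        · subst hx; subst hy
          exact ⟨⟨⟨hxy.symm, Or.inr (Or.inr ⟨hyr, hxp⟩)⟩, hyS, hxS⟩, Or.inr ⟨hyr, hxp⟩⟩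
  rw [himg, Finset.card_image_of_injOn, Finset.card_product]
  rintro ⟨x, y⟩ hmem ⟨x', y'⟩ hmem' heq
  simp only [Finset.mem_coe, Finset.mem_product, Finset.mem_filter] at hmem hmem'
  simp only [Sym2.eq_iff] at heq
  rcases heq with ⟨h1, h2⟩ | ⟨h1, h2⟩
  · exact Prod.ext h1 h2
  · exact absurd (hmem.1.2 ▸ h1 ▸ hmem'.2.2) hpr

lemma eta_lab_ne {V : Type*} [Fintype V] [DecidableEq V] {k : ℕ} (H : SimpleGraph V)
    [DecidableRel H.Adj] (c : V → Fin k) (p r : Fin k) {q : Sym2 (Fin k)}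
    (hq : q ≠ s(p, r)) (S : Finset V) :
    labEdges (etaGraph H c p r) c S q = labEdges H c S q := by
  rw [labEdges, labEdges]
  congr 1
  ext e
  induction e using Sym2.ind with
  | _ u v =>
    simp only [Finset.mem_filter, edgeIn, SimpleGraph.mem_edgeFinset,
      SimpleGraph.mem_edgeSet, Sym2.map_pair_eq, eta_adj]
    constructor
    · rintro ⟨⟨⟨hne, hadj⟩, hS⟩, hmap⟩
      rcases hadj with h | h | h
      · exact ⟨⟨h, hS⟩, hmap⟩
      · exact absurd (by rw [← hmap, h.1, h.2]) hq
      · exact absurd (by rw [← hmap, h.1, h.2]; exact Sym2.eq_swap) hq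
    · rintro ⟨⟨hadj, hS⟩, hmap⟩
      exact ⟨⟨⟨hadj.ne, Or.inl hadj⟩, hS⟩, hmap⟩

theorem eta_coeff {V : Type*} [Fintype V] [DecidableEq V] {k : ℕ} (H : SimpleGraph V)
    [DecidableRel H.Adj] (c : V → Fin k) (p r : Fin k) (hpr : p ≠ r) :
    (∀ S : Finset V,
      labEdges (etaGraph H c p r) c S s(p, r) =
          (S.filter (fun v => c v = p)).card * (S.filter (fun v => c v = r)).card ∧
      labEdges (etaGraph H c p r) c Sᶜ s(p, r) =
          ((univ.filter (fun v => c v = p)).card - (S.filter (fun v => c v = p)).card) *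
            ((univ.filter (fun v => c v = r)).card - (S.filter (fun v => c v = r)).card)) ∧
    ∀ (a : Fin k → ℕ) (b cc : Sym2 (Fin k) → ℕ),
      ((b s(p, r) ≠ a p * a r ∨
          cc s(p, r) ≠
            ((univ.filter (fun v => c v = p)).card - a p) *
              ((univ.filter (fun v => c v = r)).card - a r)) →
        coeffZlab (etaGraph H c p r) c a b cc = 0) ∧
      (b s(p, r) = a p * a r ∧
          cc s(p, r) =
            ((univ.filter (fun v => c v = p)).card - a p) *
              ((univ.filter (fun v => c v = r)).card - a r) →
        coeffZlab (etaGraph H c p r) c a b cc =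
          ∑ m ∈ Finset.range (H.edgeFinset.card + 1),
            ∑ n ∈ Finset.range (H.edgeFinset.card + 1),
              coeffZlab H c a (Function.update b s(p, r) m)
                (Function.update cc s(p, r) n)) := by
  classical
  have part1 : ∀ S : Finset V,
      labEdges (etaGraph H c p r) c S s(p, r) =
          (S.filter (fun v => c v = p)).card * (S.filter (fun v => c v = r)).card ∧
      labEdges (etaGraph H c p r) c Sᶜ s(p, r) =
          ((univ.filter (fun v => c v = p)).card - (S.filter (fun v => c v = p)).card) *
            ((univ.filter (fun v => c v = r)).card - (S.filter (fun v => c v = r)).card) := by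
    intro S
    refine ⟨eta_lab H c p r hpr S, ?_⟩
    rw [eta_lab H c p r hpr Sᶜ, card_filter_compl, card_filter_compl]
  refine ⟨part1, ?_⟩
  intro a b cc
  constructor
  · intro hne
    rw [coeffZlab, Finset.card_eq_zero, Finset.filter_eq_empty_iff]
    rintro S - ⟨h1, h2, h3⟩
    have hb := h2 s(p, r)
    have hc := h3 s(p, r)
    rw [(part1 S).1, h1 p, h1 r] at hb
    rw [(part1 S).2, h1 p, h1 r] at hc
    rcases hne with hne | hne
    · exact hne hb.symm
    · exact hne hc.symm
  · rintro ⟨hb, hcc⟩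
    set N := H.edgeFinset.card with hN
    rw [coeffZlab]
    have hsplit : (univ.filter (fun S : Finset V =>
        (∀ i : Fin k, (S.filter (fun v => c v = i)).card = a i) ∧
        (∀ q : Sym2 (Fin k), labEdges (etaGraph H c p r) c S q = b q) ∧
        (∀ q : Sym2 (Fin k), labEdges (etaGraph H c p r) c Sᶜ q = cc q)))
        = ((Finset.range (N + 1)) ×ˢ (Finset.range (N + 1))).biUnion (fun mn =>
            univ.filter (fun S : Finset V =>
              (∀ i : Fin k, (S.filter (fun v => c v = i)).card = a i) ∧
              (∀ q : Sym2 (Fin k), labEdges H c S q = Function.update b s(p, r) mn.1 q) ∧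
              (∀ q : Sym2 (Fin k), labEdges H c Sᶜ q = Function.update cc s(p, r) mn.2 q))) := by
      ext S
      simp only [Finset.mem_biUnion, Finset.mem_product, Finset.mem_filter, Finset.mem_univ,
        true_and, Finset.mem_range, Prod.exists]
      constructor
      · rintro ⟨h1, h2, h3⟩
        refine ⟨labEdges H c S s(p, r), labEdges H c Sᶜ s(p, r),
          ⟨Nat.lt_succ_of_le (labEdges_le H c S _), Nat.lt_succ_of_le (labEdges_le H c Sᶜ _)⟩,
          h1, ?_, ?_⟩
        · intro q
          by_cases hq : q = s(p, r)
          · subst hq; rw [Function.update_self]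
          · rw [Function.update_of_ne hq, ← eta_lab_ne H c p r hq S, h2 q]
        · intro q
          by_cases hq : q = s(p, r)
          · subst hq; rw [Function.update_self]
          · rw [Function.update_of_ne hq, ← eta_lab_ne H c p r hq Sᶜ, h3 q]
      · rintro ⟨m, n, -, h1, h2, h3⟩
        refine ⟨h1, ?_, ?_⟩
        · intro q
          by_cases hq : q = s(p, r)
          · subst hq
            rw [(part1 S).1, h1 p, h1 r, hb]
          · rw [eta_lab_ne H c p r hq S, h2 q, Function.update_of_ne hq]
        · intro q
          by_cases hq : q = s(p, r)
          · subst hq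
            rw [(part1 S).2, h1 p, h1 r, hcc]
          · rw [eta_lab_ne H c p r hq Sᶜ, h3 q, Function.update_of_ne hq]
    rw [hsplit, Finset.card_biUnion, Finset.sum_product]
    · rfl
    · rintro ⟨m, n⟩ - ⟨m', n'⟩ - hne
      rw [Function.onFun, Finset.disjoint_left]
      rintro S hS hS'
      simp only [Finset.mem_filter] at hS hS'
      apply hne
      have hm : m = m' := by
        have e1 := hS.2.2.1 s(p, r)
        have e2 := hS'.2.2.1 s(p, r)
        rw [Function.update_self] at e1 e2
        rw [← e1, ← e2]
      have hn : n = n' := by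
        have e1 := hS.2.2.2 s(p, r)
        have e2 := hS'.2.2.2 s(p, r)
        rw [Function.update_self] at e1 e2
        rw [← e1, ← e2]
      exact Prod.ext hm hn
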